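/- Density corollary: Let S be the set of positive integers q such that there exists k with 1 ≤ k < q, gcd(k,q) = 1, and k/q has a continued fraction expansion [0;a_1,...,a_m] bounded in average by 2. Then liminf_{n→∞} log|S ∩ [1,n]| / log n ≥ log 2 / log(1+√2) (≈ 0.786). -/

import Mathlib

/-- Auxiliary continuant, recursing on the first entry. -/
def contAux : List ℕ → ℕ
  | [] => 1
  | [a] => a
  | a :: b :: t => a * contAux (b :: t) + contAux t

/-- The continuant `K(a₁,…,aₘ)`: `K() = 1`, `K(a₁) = a₁`,
`K(a₁,…,aₘ) = aₘ·K(a₁,…,a_{m-1}) + K(a₁,…,a_{m-2})`. -/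
def continuant (l : List ℕ) : ℕ := contAux l.reverse

/-- A list of positive integers is bounded in average by `B` if every
prefix sum `a₁ + ⋯ + a_r` is at most `B·r`. -/
def BddAvg (B : ℕ) (l : List ℕ) : Prop :=
  ∀ r, 1 ≤ r → r ≤ l.length → (l.take r).sum ≤ B * r

/-- The value of the finite continued fraction `[0; a₁, …, aₘ] = 1/(a₁ + 1/(a₂ + ⋯))`. -/
def cfVal : List ℕ → ℚ
  | [] => 0
  | a :: t => 1 / (a + cfVal t)

namespace CFZ

/-- numerator companion: R [] = 0, R (a::t) = contAux t -/
def R : List ℕ → ℕ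
  | [] => 0
  | _ :: t => contAux t

@[simp] lemma R_nil : R [] = 0 := rfl
@[simp] lemma R_cons (a : ℕ) (t : List ℕ) : R (a :: t) = contAux t := rfl
@[simp] lemma Q_nil : contAux [] = 1 := rfl

lemma Q_cons (a : ℕ) (t : List ℕ) :
    contAux (a :: t) = a * contAux t + R t := by
  cases t <;> simp [contAux]

lemma Q_pos {l : List ℕ} (hl : ∀ x ∈ l, 0 < x) : 1 ≤ contAux l := by
  induction l with
  | nil => simp
  | cons a t ih =>
      have ha : 1 ≤ a := hl a (by simp)
      have ht : 1 ≤ contAux t := ih (fun x hx => hl x (by simp [hx]))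
      rw [Q_cons]
      calc 1 ≤ a * contAux t := Nat.one_le_iff_ne_zero.2 (by positivity)
      _ ≤ _ := Nat.le_add_right _ _

lemma R_lt_Q {l : List ℕ} (hl : ∀ x ∈ l, 0 < x) (hne : l ≠ [])
    (hlast : 2 ≤ l.getLast hne) : R l < contAux l := by
  induction l with
  | nil => simp at hne
  | cons a t ih =>
      cases t with
      | nil =>
          have := hlast; simp [contAux] at this ⊢; omega
      | cons b t' =>
          have ha : 1 ≤ a := hl a (by simp)
          have hQt : 1 ≤ contAux (b :: t') :=
            Q_pos (fun x hx => hl x (by simp [hx]))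
          have hRt : 1 ≤ contAux t' :=
            Q_pos (fun x hx => hl x (List.mem_cons_of_mem _ (List.mem_cons_of_mem _ hx)))
          rw [R_cons, Q_cons a, R_cons]
          nlinarith
lemma coprime_R_Q (l : List ℕ) : Nat.Coprime (R l) (contAux l) := by
  induction l with
  | nil => simp [Nat.Coprime]
  | cons a t ih =>
      rw [R_cons, Q_cons]
      have h2 : a * contAux t + R t = R t + a * contAux t := by ring
      rw [h2, Nat.Coprime, Nat.gcd_add_mul_right_right]
      exact ih.symm

lemma cfVal_nonneg {l : List ℕ} (hl : ∀ x ∈ l, 0 < x) : 0 ≤ cfVal l := by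
  induction l with
  | nil => simp [cfVal]
  | cons a t ih =>
      have ha : (1:ℚ) ≤ a := by exact_mod_cast hl a (by simp)
      have ht := ih (fun x hx => hl x (by simp [hx]))
      rw [cfVal]
      positivity

lemma cfVal_eq {l : List ℕ} (hl : ∀ x ∈ l, 0 < x) :
    cfVal l = (R l : ℚ) / (contAux l : ℚ) := by
  induction l with
  | nil => simp [cfVal]
  | cons a t ih =>
      have ha : (1:ℚ) ≤ a := by exact_mod_cast hl a (by simp)
      have hQ : (1:ℚ) ≤ contAux t := by
        exact_mod_cast Q_pos (fun x hx => hl x (by simp [hx]))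
      have ht := ih (fun x hx => hl x (by simp [hx]))
      rw [cfVal, ht, R_cons, Q_cons]
      have h1 : ((a * contAux t + R t : ℕ) : ℚ) = a * (contAux t : ℚ) + R t := by
        push_cast; ring
      have hR0 : (0:ℚ) ≤ (R t : ℚ) / (contAux t : ℚ) := by positivity
      rw [h1]
      rw [div_eq_div_iff (by linarith) (by positivity)]
      field_simp

lemma QR_inj : ∀ (l l' : List ℕ), l.length = l'.length →
    (∀ x ∈ l, 0 < x) → (∀ x ∈ l', 0 < x) →
    (∀ h : l ≠ [], 2 ≤ l.getLast h) → (∀ h : l' ≠ [], 2 ≤ l'.getLast h) →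
    contAux l = contAux l' → R l = R l' → l = l' := by
  intro l
  induction l with
  | nil =>
      intro l' hlen _ _ _ _ _ _
      cases l' with
      | nil => rfl
      | cons b t' => simp at hlen
  | cons a t ih =>
      intro l' hlen hp hp' hla hla' hQ hR
      cases l' with
      | nil => simp at hlen
      | cons a' t' =>
          have hlen' : t.length = t'.length := by simpa using hlen
          have hpt : ∀ x ∈ t, 0 < x := fun x hx => hp x (by simp [hx])
          have hpt' : ∀ x ∈ t', 0 < x := fun x hx => hp' x (by simp [hx])
          have hRtt : contAux t = contAux t' := by simpa using hR
          rw [Q_cons, Q_cons, ← hRtt] at hQ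
          rcases eq_or_ne t ([] : List ℕ) with rfl | htne
          · have ht' : t' = [] := by
              cases t' with
              | nil => rfl
              | cons b u => simp at hlen'
            subst ht'
            simp at hQ
            simp [hQ]
          · have ht'ne : t' ≠ [] := by
              cases t' with
              | nil => exfalso; exact htne (List.length_eq_zero_iff.mp hlen')
              | cons b u => simp
            have hlt : R t < contAux t := by
              apply R_lt_Q hpt htne
              have := hla (by simp)
              rwa [List.getLast_cons htne] at this
            have hlt' : R t' < contAux t' := by
              apply R_lt_Q hpt' ht'ne
              have := hla' (by simp)
              rwa [List.getLast_cons ht'ne] at this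
            rw [← hRtt] at hlt'
            -- a * X + R t = a' * X + R t', with R t, R t' < X
            have hX : 0 < contAux t := Q_pos hpt
            have haa : a = a' ∧ R t = R t' := by
              rcases Nat.lt_trichotomy a a' with h | h | h
              · exfalso
                have : a * contAux t + contAux t ≤ a' * contAux t := by
                  calc a * contAux t + contAux t = (a+1) * contAux t := by ring
                  _ ≤ a' * contAux t := Nat.mul_le_mul_right _ h
                omega
              · constructor
                · exact h
                · subst h; omega
              · exfalso
                have : a' * contAux t + contAux t ≤ a * contAux t := by
                  calc a' * contAux t + contAux t = (a'+1) * contAux t := by ring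
                  _ ≤ a * contAux t := Nat.mul_le_mul_right _ h
                omega
            obtain ⟨rfl, hRt⟩ := haa
            have hteq : t = t' := by
              apply ih t' hlen' hpt hpt'
              · intro h
                have := hla (by simp)
                rwa [List.getLast_cons h] at this
              · intro h
                have := hla' (by simp)
                rwa [List.getLast_cons h] at this
              · exact hRtt
              · cases t with
                | nil => simp at htne
                | cons b u =>
                    cases t' with
                    | nil => simp at ht'ne
                    | cons b' u' => simpa using hRt
            rw [hteq]
noncomputable def Ar : ℝ := 7/4
noncomputable def Br : ℝ := 4*(1+Real.sqrt 2)/7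

lemma s2_sq : Real.sqrt 2 ^ 2 = 2 := Real.sq_sqrt (by norm_num)
lemma s2_nonneg : 0 ≤ Real.sqrt 2 := Real.sqrt_nonneg 2
lemma s2_ge : (1.41421:ℝ) ≤ Real.sqrt 2 := by
  nlinarith [s2_sq, s2_nonneg]
lemma s2_le : Real.sqrt 2 ≤ (1.41422:ℝ) := by
  nlinarith [s2_sq, s2_nonneg]

lemma Br_nonneg : 0 ≤ Br := by
  have := s2_nonneg; unfold Br; linarith
lemma one_le_Br : 1 ≤ Br := by
  have := s2_ge; unfold Br; linarith
lemma ArBr : Ar * Br = 1 + Real.sqrt 2 := by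
  unfold Ar Br; ring

lemma quad (aR μ u₁ u₂ : ℝ) (ha : 0 ≤ aR) (h₁ : 0 ≤ u₁) (h₂ : 0 ≤ u₂)
    (hA1 : 0 ≤ μ^2 - aR^2 - 1) (hA : aR^2 + 1 ≤ μ^2)
    (hP : aR^2 ≤ (μ^2 - aR^2 - 1) * (μ^2 - 1)) :
    (aR*u₁+u₂)^2 + u₁^2 ≤ μ^2*(u₁^2+u₂^2) := by
  have hA2 : (0:ℝ) ≤ μ^2 - 1 := by nlinarith
  set s₁ := Real.sqrt (μ^2 - aR^2 - 1) with hs1d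
  set s₂ := Real.sqrt (μ^2 - 1) with hs2d
  have hs1 : s₁^2 = μ^2 - aR^2 - 1 := Real.sq_sqrt hA1
  have hs2 : s₂^2 = μ^2 - 1 := Real.sq_sqrt hA2
  have hss : aR ≤ s₁ * s₂ := by
    have h := Real.sqrt_le_sqrt hP
    rwa [Real.sqrt_sq ha, Real.sqrt_mul hA1] at h
  have key : 2*aR*u₁*u₂ ≤ (μ^2 - aR^2 - 1)*u₁^2 + (μ^2 - 1)*u₂^2 := by
    nlinarith [sq_nonneg (s₁*u₁ - s₂*u₂), mul_nonneg h₁ h₂]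
  nlinarith [key]

lemma mu_sq_ge : ∀ a : ℕ, 3 ≤ a → ((a:ℝ)^2 + 2) ≤ (Ar * Br^(a-1))^2 := by
  intro a ha
  induction a, ha using Nat.le_induction with
  | base =>
      have h1 := s2_ge
      have h2 := s2_sq
      show ((3:ℕ):ℝ)^2 + 2 ≤ (Ar * Br ^ (3-1:ℕ))^2
      norm_num [Ar, Br]
      nlinarith
  | succ a ha ih =>
      have hBr2 : (19:ℝ)/10 ≤ Br^2 := by
        have h1 := s2_ge
        unfold Br
        nlinarith [s2_sq]
      have hstep : Br^(a+1-1) = Br^(a-1) * Br := by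
        have : a + 1 - 1 = (a-1) + 1 := by omega
        rw [this, pow_succ]
      have ha3 : (3:ℝ) ≤ (a:ℝ) := by exact_mod_cast ha
      have hprev : ((a:ℝ)^2 + 2) ≤ (Ar * Br^(a-1))^2 := ih
      have hnn : (0:ℝ) ≤ Ar * Br^(a-1) := by
        have := Br_nonneg
        unfold Ar
        positivity
      rw [hstep]
      have hexp : (Ar * (Br^(a-1) * Br))^2 = (Ar * Br^(a-1))^2 * Br^2 := by ring
      rw [hexp]
      push_cast
      nlinarith [hprev, hBr2, sq_nonneg (Ar * Br^(a-1))]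

lemma key_ineq (a : ℕ) (ha : 1 ≤ a) (u₁ u₂ : ℝ) (h₁ : 0 ≤ u₁) (h₂ : 0 ≤ u₂) :
    ((a:ℝ)*u₁+u₂)^2 + u₁^2 ≤ (Ar*Br^(a-1))^2 * (u₁^2+u₂^2) := by
  rcases Nat.lt_or_ge a 3 with h3 | h3
  · interval_cases a
    · -- a = 1
      have h := quad 1 (7/4) u₁ u₂ (by norm_num) h₁ h₂ (by norm_num) (by norm_num) (by norm_num)
      have : (Ar * Br^(1-1:ℕ))^2 = (7/4:ℝ)^2 := by norm_num [Ar]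
      rw [this]
      push_cast
      linarith [h]
    · -- a = 2
      have hmu : Ar * Br^(2-1:ℕ) = 1 + Real.sqrt 2 := by
        simpa using ArBr
      have h1 := s2_ge
      have h2 := s2_sq
      have h := quad 2 (1 + Real.sqrt 2) u₁ u₂ (by norm_num) h₁ h₂
        (by nlinarith) (by nlinarith) (by nlinarith)
      rw [hmu]
      push_cast
      linarith [h]
  · have hQ := mu_sq_ge a h3
    have ha3 : (3:ℝ) ≤ (a:ℝ) := by exact_mod_cast h3
    have e1 : (1:ℝ) ≤ (Ar*Br^(a-1))^2 - (a:ℝ)^2 - 1 := by linarith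
    have e2 : ((a:ℝ)^2+1) ≤ (Ar*Br^(a-1))^2 - 1 := by linarith
    have hm := mul_le_mul e1 e2 (by positivity) (by linarith)
    exact quad (a:ℝ) (Ar*Br^(a-1)) u₁ u₂ (by positivity) h₁ h₂
      (by linarith) (by linarith) (by nlinarith)

lemma length_le_sum : ∀ l : List ℕ, (∀ x ∈ l, 0 < x) → l.length ≤ l.sum := by
  intro l hl
  induction l with
  | nil => simp
  | cons a t ih =>
      have := hl a (by simp)
      have h2 := ih (fun x hx => hl x (by simp [hx]))
      simp only [List.length_cons, List.sum_cons]
      omega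

lemma norm_bound : ∀ l : List ℕ, (∀ x ∈ l, 0 < x) →
    ((contAux l : ℝ))^2 + ((R l : ℝ))^2 ≤ (Ar^(l.length) * Br^(l.sum - l.length))^2 := by
  intro l hl
  induction l with
  | nil => simp
  | cons a t ih =>
      have ha : 1 ≤ a := hl a (by simp)
      have hpt : ∀ x ∈ t, 0 < x := fun x hx => hl x (by simp [hx])
      have hlst := length_le_sum t hpt
      have ihh := ih hpt
      have h₁ : (0:ℝ) ≤ (contAux t : ℝ) := by positivity
      have h₂ : (0:ℝ) ≤ (R t : ℝ) := by positivity
      have hkey := key_ineq a ha (contAux t : ℝ) (R t : ℝ) h₁ h₂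
      have hQc : ((contAux (a :: t) : ℝ)) = (a:ℝ) * (contAux t) + (R t) := by
        rw [Q_cons]; push_cast; ring
      have hRc : ((R (a :: t) : ℝ)) = (contAux t : ℝ) := by rw [R_cons]
      rw [hQc, hRc]
      have hmono : (Ar*Br^(a-1))^2 * (((contAux t):ℝ)^2+((R t):ℝ)^2)
          ≤ (Ar*Br^(a-1))^2 * (Ar^(t.length) * Br^(t.sum - t.length))^2 := by
        apply mul_le_mul_of_nonneg_left ihh (by positivity)
      have hexp : (Ar*Br^(a-1))^2 * (Ar^(t.length) * Br^(t.sum - t.length))^2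
          = (Ar^((a::t).length) * Br^((a::t).sum - (a::t).length))^2 := by
        have h1 : (a::t).length = t.length + 1 := by simp
        have h2 : (a::t).sum = a + t.sum := by simp
        rw [h1, h2]
        have h3 : a + t.sum - (t.length+1) = (t.sum - t.length) + (a-1) := by omega
        rw [h3, pow_add, pow_add]
        ring
      calc ((a:ℝ) * ↑(contAux t) + ↑(R t)) ^ 2 + (↑(contAux t):ℝ) ^ 2
          ≤ (Ar*Br^(a-1))^2 * (((contAux t):ℝ)^2+((R t):ℝ)^2) := hkey
        _ ≤ _ := by rw [← hexp]; exact hmono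

lemma Q_le_pow (l : List ℕ) (hp : ∀ x ∈ l, 0 < x) (hs : l.sum ≤ 2*l.length) :
    ((contAux l : ℝ)) ≤ (1+Real.sqrt 2)^(l.length) := by
  have hb := norm_bound l hp
  have h1 : ((contAux l : ℝ))^2 ≤ (Ar^(l.length) * Br^(l.sum - l.length))^2 := by
    nlinarith [sq_nonneg ((R l : ℝ))]
  have hX : (0:ℝ) ≤ Ar^(l.length) * Br^(l.sum - l.length) := by
    have := Br_nonneg; unfold Ar; positivity
  have h2 : ((contAux l : ℝ)) ≤ Ar^(l.length) * Br^(l.sum - l.length) := by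
    by_contra hcon
    push_neg at hcon
    have hm := mul_self_lt_mul_self hX hcon
    nlinarith
  have h3 : Br^(l.sum - l.length) ≤ Br^(l.length) :=
    pow_le_pow_right₀ one_le_Br (by omega)
  have h4 : Ar^(l.length) * Br^(l.sum - l.length) ≤ Ar^(l.length) * Br^(l.length) := by
    apply mul_le_mul_of_nonneg_left h3 (by unfold Ar; positivity)
  have h5 : Ar^(l.length) * Br^(l.length) = (1+Real.sqrt 2)^(l.length) := by
    rw [← mul_pow, ArBr]
  linarith
def dec : ℕ → List ℕ → List ℕ
  | _, [] => []
  | p, x :: xs => (x - p) :: dec (x+1) xs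

@[simp] lemma dec_nil (p : ℕ) : dec p [] = [] := rfl
@[simp] lemma dec_cons (p x : ℕ) (xs : List ℕ) :
    dec p (x :: xs) = (x - p) :: dec (x+1) xs := rfl

lemma length_dec : ∀ (e : List ℕ) (p : ℕ), (dec p e).length = e.length := by
  intro e
  induction e with
  | nil => intro p; rfl
  | cons x xs ih => intro p; simp [ih]

lemma sum_dec : ∀ (e : List ℕ) (p M : ℕ), e.Pairwise (· < ·) →
    (∀ x ∈ e, p ≤ x) → (∀ x ∈ e, x < M) → (dec p e).sum + e.length ≤ M - p := by
  intro e
  induction e with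
  | nil => intro p M _ _ _; simp
  | cons x xs ih =>
      intro p M hs hp hM
      obtain ⟨hhead, htail⟩ := List.pairwise_cons.mp hs
      have h1 := ih (x+1) M htail (fun y hy => hhead y hy) (fun y hy => hM y (by simp [hy]))
      have h2 : p ≤ x := hp x (by simp)
      have h3 : x < M := hM x (by simp)
      simp only [dec_cons, List.sum_cons, List.length_cons]
      omega

lemma dec_inj : ∀ (e e' : List ℕ) (p : ℕ), e.Pairwise (· < ·) → e'.Pairwise (· < ·) →
    (∀ x ∈ e, p ≤ x) → (∀ x ∈ e', p ≤ x) → dec p e = dec p e' → e = e' := by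
  intro e
  induction e with
  | nil =>
      intro e' p _ _ _ _ h
      cases e' with
      | nil => rfl
      | cons y ys => simp at h
  | cons x xs ih =>
      intro e' p hs hs' hp hp' h
      cases e' with
      | nil => simp at h
      | cons y ys =>
          simp only [dec_cons, List.cons.injEq] at h
          have hx : x = y := by
            have := hp x (by simp); have := hp' y (by simp); omega
          subst hx
          have := ih ys (x+1) (List.pairwise_cons.mp hs).2 (List.pairwise_cons.mp hs').2
            (fun z hz => (List.pairwise_cons.mp hs).1 z hz)
            (fun z hz => (List.pairwise_cons.mp hs').1 z hz) h.2
          rw [this]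

def Good (c : List ℕ) : Prop := ∀ r, (c.take r).sum ≤ r

lemma exists_good_rotation (c : List ℕ) (hc : c.sum ≤ c.length) (hne : c ≠ []) :
    ∃ k < c.length, Good (c.rotate k) := by
  set m := c.length with hm
  have hm0 : 0 < m := List.length_pos_iff.mpr hne
  set F : ℕ → ℤ := fun j => ((c.take j).sum : ℤ) - j with hF
  obtain ⟨k, hk, hmax⟩ := Finset.exists_max_image (Finset.range m) F ⟨0, by simpa using hm0⟩
  have hk' : k < m := Finset.mem_range.mp hk
  have hF0 : F 0 = 0 := by simp [hF]
  have hFm : F m ≤ F k := by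
    have hc' : c.sum ≤ c.length := by rw [← hm]; exact hc
    have h1 : F m ≤ 0 := by
      simp only [hF, hm, List.take_length]
      omega
    have h2 : (0:ℤ) ≤ F k := by rw [← hF0]; exact hmax 0 (by simpa using hm0)
    linarith
  have hmax' : ∀ j ≤ m, F j ≤ F k := by
    intro j hj
    rcases eq_or_lt_of_le hj with rfl | hj'
    · exact hFm
    · exact hmax j (Finset.mem_range.mpr hj')
  refine ⟨k, hk', ?_⟩
  intro r
  rcases le_or_gt m r with hr | hr
  · have h1 : ((c.rotate k).take r) = c.rotate k :=
      List.take_of_length_le (by rw [List.length_rotate]; exact hr)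
    rw [h1, (List.rotate_perm c k).sum_eq]
    omega
  · rw [List.rotate_eq_drop_append_take (le_of_lt hk')]
    have hdl : (c.drop k).length = m - k := by simp [hm]
    rcases le_or_gt r (m - k) with hr2 | hr2
    · rw [List.take_append_of_le_length (by rw [hdl]; exact hr2)]
      have hsplit : c.take (k + r) = c.take k ++ (c.drop k).take r := List.take_add (l := c) (i := k) (j := r)
      have e2 : (c.take (k+r)).sum = (c.take k).sum + ((c.drop k).take r).sum := by
        rw [hsplit, List.sum_append]
      have e1 := hmax' (k+r) (by omega)
      simp only [hF] at e1
      omega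
    · rw [List.take_append]
      have h1 : (c.drop k).take r = c.drop k := List.take_of_length_le (by omega)
      have h2 : (c.take k).take (r - (c.drop k).length) = c.take (r - (m - k)) := by
        rw [hdl, List.take_take]
        congr 1
        omega
      rw [h1, h2, List.sum_append]
      set j := r - (m - k) with hj
      have e1 := hmax' j (by omega)
      simp only [hF] at e1
      have e2 : (c.take k).sum + (c.drop k).sum = c.sum := by
        rw [← List.sum_append, List.take_append_drop]
      omega
/-- the set of "Zaremba-average" denominators -/
def SProp (q : ℕ) : Prop := ∃ k, 1 ≤ k ∧ k < q ∧ Nat.Coprime k q ∧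
    ∃ l : List ℕ, (∀ x ∈ l, 0 < x) ∧ BddAvg 2 l ∧ cfVal l = (k : ℚ) / q

lemma R_pos {l : List ℕ} (hne : l ≠ []) (hp : ∀ x ∈ l, 0 < x) : 1 ≤ R l := by
  cases l with
  | nil => simp at hne
  | cons a t => exact Q_pos (fun x hx => hp x (by simp [hx]))

lemma mem_S_of (l : List ℕ) (hp : ∀ x ∈ l, 0 < x) (hb : BddAvg 2 l)
    (h1 : 1 ≤ R l) (h2 : R l < contAux l) : SProp (contAux l) :=
  ⟨R l, h1, h2, coprime_R_Q l, l, hp, hb, cfVal_eq hp⟩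

def tOf (c : List ℕ) : List ℕ := c.map (· + 1) ++ [2]
def lOf (c : List ℕ) : List ℕ := 1 :: tOf c

lemma sum_map_succ (u : List ℕ) : (u.map (· + 1)).sum = u.sum + u.length := by
  induction u with
  | nil => simp
  | cons a t ih => simp [ih]; omega

lemma tOf_ne (c : List ℕ) : tOf c ≠ [] := by simp [tOf]
lemma lOf_ne (c : List ℕ) : lOf c ≠ [] := by simp [lOf]

lemma tOf_pos (c : List ℕ) : ∀ x ∈ tOf c, 0 < x := by
  intro x hx
  simp only [tOf, List.mem_append, List.mem_map, List.mem_singleton] at hx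
  rcases hx with ⟨y, _, rfl⟩ | rfl <;> omega

lemma lOf_pos (c : List ℕ) : ∀ x ∈ lOf c, 0 < x := by
  intro x hx
  rcases List.mem_cons.mp hx with rfl | h
  · norm_num
  · exact tOf_pos c x h

lemma getLast_tOf (c : List ℕ) (h : tOf c ≠ []) : (tOf c).getLast h = 2 := by
  simp only [tOf]
  exact List.getLast_append_singleton _

lemma getLast_lOf (c : List ℕ) (h : lOf c ≠ []) : (lOf c).getLast h = 2 := by
  simp only [lOf]
  rw [List.getLast_cons (tOf_ne c)]
  exact getLast_tOf c _

lemma length_tOf (c : List ℕ) : (tOf c).length = c.length + 1 := by simp [tOf]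
lemma length_lOf (c : List ℕ) : (lOf c).length = c.length + 2 := by simp [lOf, tOf]
lemma sum_tOf (c : List ℕ) : (tOf c).sum = c.sum + c.length + 2 := by
  simp only [tOf, List.sum_append, sum_map_succ, List.sum_cons, List.sum_nil]
  omega
lemma sum_lOf (c : List ℕ) : (lOf c).sum = c.sum + c.length + 3 := by
  simp only [lOf, List.sum_cons, sum_tOf]
  omega

lemma good_sum {c : List ℕ} (hg : Good c) : c.sum ≤ c.length := by
  have := hg c.length
  rwa [List.take_length] at this

lemma take_sum_tOf {c : List ℕ} (hg : Good c) (r : ℕ) :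
    ((tOf c).take r).sum ≤ 2 * r := by
  unfold tOf
  rcases le_or_gt r c.length with hr | hr
  · rw [List.take_append_of_le_length (by simpa using hr), ← List.map_take, sum_map_succ]
    have h1 := hg r
    have h2 : (c.take r).length ≤ r := by simp
    omega
  · rw [List.take_append,
      List.take_of_length_le (by simpa using le_of_lt hr), List.sum_append, sum_map_succ]
    have h1 : ∀ j : ℕ, (List.take j ([2] : List ℕ)).sum ≤ 2 := by
      intro j; cases j <;> simp
    have h2 := h1 (r - (c.map (· + 1)).length)
    have := good_sum hg
    omega

lemma take_sum_lOf {c : List ℕ} (hg : Good c) (r : ℕ) :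
    ((lOf c).take r).sum ≤ 2 * r := by
  cases r with
  | zero => simp
  | succ r =>
      unfold lOf
      rw [List.take_succ_cons, List.sum_cons]
      have := take_sum_tOf hg r
      omega

lemma bddavg_tOf {c : List ℕ} (hg : Good c) : BddAvg 2 (tOf c) :=
  fun r _ _ => take_sum_tOf hg r
lemma bddavg_lOf {c : List ℕ} (hg : Good c) : BddAvg 2 (lOf c) :=
  fun r _ _ => take_sum_lOf hg r

lemma R_lOf (c : List ℕ) : R (lOf c) = contAux (tOf c) := rfl

lemma R_tOf_lt (c : List ℕ) : R (tOf c) < contAux (tOf c) :=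
  R_lt_Q (tOf_pos c) (tOf_ne c) (by rw [getLast_tOf])

lemma R_lOf_lt (c : List ℕ) : R (lOf c) < contAux (lOf c) :=
  R_lt_Q (lOf_pos c) (lOf_ne c) (by rw [getLast_lOf])

lemma Q_lOf_le {c : List ℕ} (hg : Good c) :
    ((contAux (lOf c) : ℝ)) ≤ (1 + Real.sqrt 2) ^ (c.length + 2) := by
  have h := Q_le_pow (lOf c) (lOf_pos c) (by
    rw [sum_lOf, length_lOf]
    have := good_sum hg
    omega)
  rwa [length_lOf] at h

lemma SProp_lOf {c : List ℕ} (hg : Good c) : SProp (contAux (lOf c)) :=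
  mem_S_of _ (lOf_pos c) (bddavg_lOf hg) (R_pos (lOf_ne c) (lOf_pos c)) (R_lOf_lt c)

lemma SProp_tOf {c : List ℕ} (hg : Good c) : SProp (contAux (tOf c)) :=
  mem_S_of _ (tOf_pos c) (bddavg_tOf hg) (R_pos (tOf_ne c) (tOf_pos c)) (R_tOf_lt c)
open scoped Classical in
noncomputable def rotIdx (c : List ℕ) : ℕ :=
  if h : ∃ j, j < c.length ∧ Good (c.rotate j) then h.choose else 0

open scoped Classical in
lemma rotIdx_spec {c : List ℕ} (h : ∃ j, j < c.length ∧ Good (c.rotate j)) :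
    rotIdx c < c.length ∧ Good (c.rotate (rotIdx c)) := by
  rw [rotIdx, dif_pos h]; exact h.choose_spec

noncomputable def Tn (n : ℕ) : Finset ℕ :=
  @Finset.filter _ SProp (Classical.decPred _) (Finset.Icc 1 n)

lemma mem_Tn {n q : ℕ} : q ∈ Tn n ↔ SProp q ∧ 1 ≤ q ∧ q ≤ n := by
  rw [Tn, @Finset.mem_filter _ _ (Classical.decPred _), Finset.mem_Icc]
  tauto

noncomputable def fEnc (s : Finset ℕ) : (ℕ × ℕ) × ℕ :=
  ((contAux (lOf ((dec 0 (s.sort (· ≤ ·))).rotate (rotIdx (dec 0 (s.sort (· ≤ ·)))))),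
    contAux (tOf ((dec 0 (s.sort (· ≤ ·))).rotate (rotIdx (dec 0 (s.sort (· ≤ ·))))))),
   rotIdx (dec 0 (s.sort (· ≤ ·))))

lemma master (n t : ℕ) (ht : 1 ≤ t) (hn : ((1:ℝ)+Real.sqrt 2)^(t+2) ≤ (n:ℝ)) :
    (2*t).choose t ≤ (Tn n).card^2 * t := by
  classical
  have key : ∀ s ∈ Finset.powersetCard t (Finset.range (2*t)),
      (dec 0 (s.sort (· ≤ ·))).length = t ∧ (dec 0 (s.sort (· ≤ ·))).sum ≤ t := by
    intro s hs
    obtain ⟨hsub, hcard⟩ := Finset.mem_powersetCard.mp hs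
    have hsorted := (Finset.sortedLT_sort s).pairwise
    have hmem : ∀ x ∈ s.sort (· ≤ ·), x < 2*t := fun x hx =>
      Finset.mem_range.mp (hsub ((Finset.mem_sort _).mp hx))
    have hlen : (s.sort (· ≤ ·)).length = t := by rw [Finset.length_sort]; exact hcard
    refine ⟨by rw [length_dec, hlen], ?_⟩
    have := sum_dec (s.sort (· ≤ ·)) 0 (2*t) hsorted (fun x _ => Nat.zero_le x) hmem
    omega
  have hex : ∀ s ∈ Finset.powersetCard t (Finset.range (2*t)),
      ∃ j, j < (dec 0 (s.sort (· ≤ ·))).length ∧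
        Good ((dec 0 (s.sort (· ≤ ·))).rotate j) := by
    intro s hs
    obtain ⟨hlen, hsum⟩ := key s hs
    exact exists_good_rotation _ (by omega) (by
      intro h
      rw [h] at hlen
      simp at hlen
      omega)
  have hcard1 : (Finset.powersetCard t (Finset.range (2*t))).card = (2*t).choose t := by
    rw [Finset.card_powersetCard, Finset.card_range]
  have hcard2 : (((Tn n) ×ˢ (Tn n)) ×ˢ (Finset.range t)).card = (Tn n).card^2 * t := by
    rw [Finset.card_product, Finset.card_product, Finset.card_range, sq]
  rw [← hcard1, ← hcard2]
  apply Finset.card_le_card_of_injOn fEnc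
  · -- maps into
    intro s hs
    obtain ⟨hlen, hsum⟩ := key s hs
    obtain ⟨hklt, hgood⟩ := rotIdx_spec (hex s hs)
    set c := dec 0 (s.sort (· ≤ ·)) with hc
    set k := rotIdx c with hk
    set c' := c.rotate k with hc'
    have hlen' : c'.length = t := by rw [hc', List.length_rotate]; exact hlen
    have hfs : fEnc s = ((contAux (lOf c'), contAux (tOf c')), k) := rfl
    have hQn : contAux (lOf c') ≤ n := by
      have h1 := Q_lOf_le hgood
      rw [hlen'] at h1
      exact_mod_cast h1.trans hn
    have hRQ : contAux (tOf c') < contAux (lOf c') := R_lOf_lt c'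
    rw [hfs, Finset.mem_coe, Finset.mem_product, Finset.mem_product]
    refine ⟨⟨?_, ?_⟩, ?_⟩
    · show contAux (lOf c') ∈ Tn n
      exact mem_Tn.mpr ⟨SProp_lOf hgood, Q_pos (lOf_pos c'), hQn⟩
    · show contAux (tOf c') ∈ Tn n
      exact mem_Tn.mpr ⟨SProp_tOf hgood, Q_pos (tOf_pos c'), by omega⟩
    · show k ∈ Finset.range t
      exact Finset.mem_range.mpr (by omega)
  · -- injectivity
    intro s hs s₂ hs₂ heq
    obtain ⟨hlen₁, _⟩ := key s hs
    obtain ⟨hklt₁, hgood₁⟩ := rotIdx_spec (hex s hs)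
    obtain ⟨hlen₂, _⟩ := key s₂ hs₂
    obtain ⟨hklt₂, hgood₂⟩ := rotIdx_spec (hex s₂ hs₂)
    set c₁ := dec 0 (s.sort (· ≤ ·)) with hc1
    set c₂ := dec 0 (s₂.sort (· ≤ ·)) with hc2
    set k₁ := rotIdx c₁ with hk1
    set k₂ := rotIdx c₂ with hk2
    have h1 : fEnc s = ((contAux (lOf (c₁.rotate k₁)), contAux (tOf (c₁.rotate k₁))), k₁) := rfl
    have h2 : fEnc s₂ = ((contAux (lOf (c₂.rotate k₂)), contAux (tOf (c₂.rotate k₂))), k₂) := rfl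
    rw [h1, h2, Prod.mk.injEq, Prod.mk.injEq] at heq
    obtain ⟨⟨hQeq, hReq⟩, hkeq⟩ := heq
    have hleq : lOf (c₁.rotate k₁) = lOf (c₂.rotate k₂) := by
      apply QR_inj _ _ ?_ (lOf_pos _) (lOf_pos _) ?_ ?_ hQeq ?_
      · rw [length_lOf, length_lOf, List.length_rotate, List.length_rotate, hlen₁, hlen₂]
      · intro h; rw [getLast_lOf]
      · intro h; rw [getLast_lOf]
      · exact hReq
    have htof : tOf (c₁.rotate k₁) = tOf (c₂.rotate k₂) := by
      simpa [lOf] using hleq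
    have hmapeq : (c₁.rotate k₁).map (· + 1) = (c₂.rotate k₂).map (· + 1) := by
      have := htof
      unfold tOf at this
      exact List.append_cancel_right this
    have hroteq : c₁.rotate k₁ = c₂.rotate k₂ := by
      have hinj : Function.Injective (· + 1 : ℕ → ℕ) := fun a b h => by simpa using h
      exact List.map_injective_iff.mpr hinj hmapeq
    have hceq : c₁ = c₂ := by
      have e1 : (c₁.rotate k₁).rotate (c₁.length - k₁) = c₁ := by
        rw [List.rotate_rotate, show k₁ + (c₁.length - k₁) = c₁.length by omega,
          List.rotate_length]
      have e2 : (c₂.rotate k₂).rotate (c₂.length - k₂) = c₂ := by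
        rw [List.rotate_rotate, show k₂ + (c₂.length - k₂) = c₂.length by omega,
          List.rotate_length]
      rw [← e1, ← e2, hroteq, hkeq, hlen₁, hlen₂]
    have hsorteq : s.sort (· ≤ ·) = s₂.sort (· ≤ ·) := by
      apply dec_inj _ _ 0 ((Finset.sortedLT_sort s).pairwise) ((Finset.sortedLT_sort s₂).pairwise)
        (fun x _ => Nat.zero_le x) (fun x _ => Nat.zero_le x)
      rw [← hc1, ← hc2]; exact hceq
    rw [← Finset.sort_toFinset s (· ≤ ·), ← Finset.sort_toFinset s₂ (· ≤ ·), hsorteq]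
end CFZ

open CFZ

set_option maxHeartbeats 1000000 in
theorem density_of_F2 (ε : ℝ) (hε : 0 < ε) :
    ∃ N : ℕ, ∀ n ≥ N,
      (n : ℝ) ^ (Real.log 2 / Real.log (1 + Real.sqrt 2) - ε) ≤
        (({q : ℕ | ∃ k, 1 ≤ k ∧ k < q ∧ Nat.Coprime k q ∧
            ∃ l : List ℕ, (∀ x ∈ l, 0 < x) ∧ BddAvg 2 l ∧
              cfVal l = (k : ℚ) / q} ∩ Set.Icc 1 n).ncard : ℝ) := by
  classical
  have hs2 := s2_ge
  have hs2' := s2_le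
  set b : ℝ := 1 + Real.sqrt 2 with hbdef
  have hb1 : (1:ℝ) < b := by rw [hbdef]; linarith
  have hb0 : (0:ℝ) < b := by linarith
  have hb2 : (2:ℝ) ≤ b := by rw [hbdef]; linarith
  have hlogb_pos : 0 < Real.log b := Real.log_pos hb1
  have hlog2 : (0:ℝ) < Real.log 2 := Real.log_pos (by norm_num)
  have hlogb_ge : Real.log 2 ≤ Real.log b := Real.log_le_log (by norm_num) hb2
  have hlog2_half : (1:ℝ)/2 ≤ Real.log 2 := by
    have := Real.log_two_gt_d9
    linarith
  set c₀ : ℝ := Real.log 2 / Real.log b with hc0def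
  have hc0pos : 0 < c₀ := div_pos hlog2 hlogb_pos
  have hbc0 : b ^ c₀ = (2:ℝ) := by
    rw [Real.rpow_def_of_pos hb0, hc0def, mul_comm,
      div_mul_cancel₀ _ (ne_of_gt hlogb_pos)]
    exact Real.exp_log (by norm_num)
  set K : ℝ := 64/ε + 8 with hKdef
  have hK1 : (1:ℝ) ≤ K := by
    have : 0 < 64/ε := by positivity
    rw [hKdef]; linarith
  have hK0 : (0:ℝ) ≤ K := by linarith
  refine ⟨max 15 (⌈K ^ ((2:ℝ)/ε)⌉₊ + 1), ?_⟩
  intro n hn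
  have hn15 : 15 ≤ n := le_trans (le_max_left _ _) hn
  have hnK : K ^ ((2:ℝ)/ε) ≤ (n:ℝ) := by
    have h1 : ⌈K ^ ((2:ℝ)/ε)⌉₊ + 1 ≤ n := le_trans (le_max_right _ _) hn
    have h2 := Nat.le_ceil (K ^ ((2:ℝ)/ε))
    have h3 : ((⌈K ^ ((2:ℝ)/ε)⌉₊ : ℕ) : ℝ) ≤ (n:ℝ) := by
      exact_mod_cast le_trans (Nat.le_succ _) h1
    linarith
  have hnR : (15:ℝ) ≤ (n:ℝ) := by exact_mod_cast hn15
  have hn0 : (0:ℝ) < n := by linarith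
  have hn1 : (1:ℝ) ≤ n := by linarith
  set m := ⌊Real.logb b n⌋₊ with hmdef
  have hlogbn_nonneg : 0 ≤ Real.logb b n := Real.logb_nonneg hb1 hn1
  have hm_le : (m:ℝ) ≤ Real.logb b n := Nat.floor_le hlogbn_nonneg
  have hm_lt : Real.logb b n < m + 1 := Nat.lt_floor_add_one _
  have hm3 : 3 ≤ m := by
    have hb3 : b ^ (3:ℝ) ≤ 15 := by
      rw [show (3:ℝ) = ((3:ℕ):ℝ) by norm_num, Real.rpow_natCast, hbdef]
      nlinarith [s2_sq, s2_nonneg]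
    have h1 : (3:ℝ) ≤ Real.logb b n := by
      rw [Real.le_logb_iff_rpow_le hb1 hn0]
      exact le_trans hb3 hnR
    exact Nat.le_floor (by exact_mod_cast h1)
  set t := m - 2 with htdef
  have ht2 : t + 2 = m := by omega
  have ht1 : 1 ≤ t := by omega
  have hbm_le : (b:ℝ) ^ (m:ℕ) ≤ (n:ℝ) := by
    have h1 : b ^ ((m:ℕ):ℝ) ≤ b ^ (Real.logb b n) :=
      Real.rpow_le_rpow_of_exponent_le (le_of_lt hb1) hm_le
    rwa [Real.rpow_natCast, Real.rpow_logb hb0 (ne_of_gt hb1) hn0] at h1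
  have hn_lt : (n:ℝ) < b ^ (m+1:ℕ) := by
    have h1 : b ^ (Real.logb b n) < b ^ (((m+1:ℕ)):ℝ) := by
      apply Real.rpow_lt_rpow_of_exponent_lt hb1
      push_cast; linarith
    rwa [Real.rpow_natCast, Real.rpow_logb hb0 (ne_of_gt hb1) hn0] at h1
  have hmaster := master n t ht1 (by rw [ht2, ← hbdef]; exact hbm_le)
  set X := (Tn n).card with hXdef
  have h4 := Nat.four_pow_le_two_mul_add_one_mul_central_binom t
  have hchain : 4^t ≤ (2*t+1)^2 * X^2 := by
    calc 4^t ≤ (2*t+1) * (2*t).choose t := h4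
    _ ≤ (2*t+1) * (X^2 * t) := Nat.mul_le_mul_left _ hmaster
    _ = X^2 * ((2*t+1) * t) := by ring
    _ ≤ X^2 * ((2*t+1) * (2*t+1)) := Nat.mul_le_mul_left _ (Nat.mul_le_mul_left _ (by omega))
    _ = (2*t+1)^2 * X^2 := by ring
  have hcast : (2:ℝ)^t ≤ (2*(t:ℝ)+1) * (X:ℝ) := by
    have h1 : ((4:ℝ))^t ≤ ((2*(t:ℝ)+1))^2 * (X:ℝ)^2 := by exact_mod_cast hchain
    have h3 : ((2:ℝ)^t)^2 = (4:ℝ)^t := by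
      rw [← pow_mul, mul_comm, pow_mul]; norm_num
    by_contra hcon
    push_neg at hcon
    have h2 : (0:ℝ) ≤ (2*(t:ℝ)+1) * (X:ℝ) := by positivity
    nlinarith [h1, h3, h2, hcon]
  -- rewrite the ncard
  have hset : ({q : ℕ | ∃ k, 1 ≤ k ∧ k < q ∧ Nat.Coprime k q ∧
      ∃ l : List ℕ, (∀ x ∈ l, 0 < x) ∧ BddAvg 2 l ∧
        cfVal l = (k : ℚ) / q} ∩ Set.Icc 1 n : Set ℕ) = (↑(Tn n) : Set ℕ) := by
    ext q
    simp only [Set.mem_inter_iff, Set.mem_setOf_eq, Set.mem_Icc, Finset.mem_coe]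
    rw [mem_Tn]
    exact ⟨fun ⟨h1, h2, h3⟩ => ⟨h1, h2, h3⟩, fun ⟨h1, h2, h3⟩ => ⟨h1, h2, h3⟩⟩
  rw [hset, Set.ncard_coe_finset, ← hXdef]
  -- main estimate
  have hnc0 : (n:ℝ) ^ c₀ ≤ 2 ^ (m+1:ℕ) := by
    have h1 : (n:ℝ) ^ c₀ ≤ (b ^ (m+1:ℕ)) ^ c₀ :=
      Real.rpow_le_rpow (le_of_lt hn0) (le_of_lt hn_lt) (le_of_lt hc0pos)
    have h2 : (b ^ (m+1:ℕ)) ^ c₀ = (2:ℝ) ^ (m+1:ℕ) := by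
      rw [← Real.rpow_natCast b (m+1), ← Real.rpow_mul (le_of_lt hb0), mul_comm,
        Real.rpow_mul (le_of_lt hb0), hbc0, Real.rpow_natCast]
    rw [h2] at h1
    exact h1
  have hlogn_pos : 0 < Real.log n := Real.log_pos (by linarith)
  have hm_logs : (m:ℝ) ≤ 2 * Real.log n := by
    have h1 : Real.logb b n = Real.log n / Real.log b := (Real.log_div_log).symm
    have h2 : Real.log n / Real.log b ≤ Real.log n / ((1:ℝ)/2) := by
      apply div_le_div_of_nonneg_left (le_of_lt hlogn_pos) (by norm_num)
      linarith
    have h3 : Real.log n / ((1:ℝ)/2) = 2 * Real.log n := by ring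
    rw [h1] at hm_le
    linarith
  have hKn : K ≤ (n:ℝ)^(ε/2) := by
    have h1 : (K ^ ((2:ℝ)/ε)) ^ (ε/2) ≤ (n:ℝ)^(ε/2) :=
      Real.rpow_le_rpow (by positivity) hnK (by positivity)
    have h2 : (K ^ ((2:ℝ)/ε)) ^ (ε/2) = K := by
      rw [← Real.rpow_mul hK0]
      rw [show ((2:ℝ)/ε) * (ε/2) = 1 by field_simp]
      exact Real.rpow_one K
    rwa [h2] at h1
  have hnhalf_pos : (0:ℝ) < (n:ℝ)^(ε/2) := Real.rpow_pos_of_pos hn0 _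
  have hnhalf1 : (1:ℝ) ≤ (n:ℝ)^(ε/2) := by
    have := Real.rpow_le_rpow (by norm_num : (0:ℝ) ≤ 1) hn1 (by positivity : (0:ℝ) ≤ ε/2)
    rwa [Real.one_rpow] at this
  have hlog_le : Real.log n ≤ (2/ε) * (n:ℝ)^(ε/2) := by
    have h1 : Real.log ((n:ℝ)^(ε/2)) ≤ (n:ℝ)^(ε/2) - 1 :=
      Real.log_le_sub_one_of_pos hnhalf_pos
    rw [Real.log_rpow hn0] at h1
    have h2 : (ε/2) * Real.log n ≤ (n:ℝ)^(ε/2) := by linarith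
    calc Real.log n = (2/ε) * ((ε/2) * Real.log n) := by field_simp
    _ ≤ (2/ε) * (n:ℝ)^(ε/2) := mul_le_mul_of_nonneg_left h2 (by positivity)
  have ht_le : (t:ℝ) ≤ 2 * Real.log n := by
    have h1 : (t:ℝ) ≤ (m:ℝ) := by exact_mod_cast Nat.sub_le m 2
    linarith
  have hn2 : (n:ℝ)^(ε/2) * (n:ℝ)^(ε/2) = (n:ℝ)^ε := by
    rw [← Real.rpow_add hn0]; norm_num
  have hfinal1 : 8*(2*(t:ℝ)+1) ≤ (n:ℝ)^ε := by
    have h1 : 8*(2*(t:ℝ)+1) ≤ 32 * Real.log n + 8 := by linarith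
    have h2 : 32 * Real.log n + 8 ≤ (64/ε) * (n:ℝ)^(ε/2) + 8 := by
      have := mul_le_mul_of_nonneg_left hlog_le (by norm_num : (0:ℝ) ≤ 32)
      calc 32 * Real.log n + 8 ≤ 32 * ((2/ε) * (n:ℝ)^(ε/2)) + 8 := by linarith
      _ = (64/ε) * (n:ℝ)^(ε/2) + 8 := by ring
    have h3 : (64/ε) * (n:ℝ)^(ε/2) + 8 ≤ K * (n:ℝ)^(ε/2) := by
      rw [hKdef]
      have : (8:ℝ) ≤ 8 * (n:ℝ)^(ε/2) := by nlinarith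
      nlinarith
    have h4 : K * (n:ℝ)^(ε/2) ≤ (n:ℝ)^ε := by
      rw [← hn2]
      exact mul_le_mul_of_nonneg_right hKn (le_of_lt hnhalf_pos)
    linarith
  have hrpow_sub : (n:ℝ) ^ (c₀ - ε) = (n:ℝ)^c₀ / (n:ℝ)^ε := Real.rpow_sub hn0 _ _
  rw [hrpow_sub, div_le_iff₀ (Real.rpow_pos_of_pos hn0 ε)]
  have h2m : (2:ℝ)^(m+1:ℕ) = 8 * 2^t := by
    rw [show m + 1 = t + 3 by omega, pow_add]
    norm_num
    ring
  calc (n:ℝ)^c₀ ≤ 2^(m+1:ℕ) := hnc0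
  _ = 8*(2:ℝ)^t := h2m
  _ ≤ 8*((2*(t:ℝ)+1) * (X:ℝ)) := mul_le_mul_of_nonneg_left hcast (by norm_num)
  _ = (8*(2*(t:ℝ)+1)) * (X:ℝ) := by ring
  _ ≤ (n:ℝ)^ε * (X:ℝ) := mul_le_mul_of_nonneg_right hfinal1 (by positivity)
  _ = (X:ℝ) * (n:ℝ)^ε := by ring
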